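/- Let T : H → H be nonexpansive on a real Hilbert space and z⋆ a fixed point of T. For the averaged iteration z^{k+1} = (T z^k + z^k)/2, one has the summability estimate ∑_{k=0}^{∞} ‖T z^k - z^k‖² ≤ 4 ‖z^0 - z⋆‖², and in particular ‖T z^k - z^k‖ → 0. -/
import Mathlib

lemma km_key {H : Type*} [NormedAddCommGroup H] [InnerProductSpace ℝ H]
    (T : H → H) (hT : ∀ x y : H, ‖T x - T y‖ ≤ ‖x - y‖)
    (zs : H) (hzs : T zs = zs) (x : H) :
    ‖(2 : ℝ)⁻¹ • (T x + x) - zs‖ ^ 2 + (1/4) * ‖T x - x‖ ^ 2 ≤ ‖x - zs‖ ^ 2 := by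
  set a := T x - zs with ha
  set b := x - zs with hb
  have hab : ‖a‖ ≤ ‖b‖ := by simpa [ha, hb, hzs] using hT x zs
  have h1 : (2 : ℝ)⁻¹ • (T x + x) - zs = (2 : ℝ)⁻¹ • (a + b) := by
    rw [ha, hb]; module
  have h2 : T x - x = a - b := by rw [ha, hb]; abel
  rw [h1, h2, norm_smul]
  have hpar := parallelogram_law_with_norm ℝ a b
  have h3 : ‖(2:ℝ)⁻¹‖ = 2⁻¹ := by simp
  rw [h3]
  nlinarith [norm_nonneg (a + b), norm_nonneg (a - b), norm_nonneg a, norm_nonneg b,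
    sq_nonneg (‖a‖ - ‖b‖)]

/-- For the averaged iteration of a nonexpansive map with a fixed point `z⋆`,
the residuals are square-summable with `∑ ‖T z^k - z^k‖² ≤ 4‖z^0 - z⋆‖²`, and in
particular the residuals tend to `0`. -/
theorem km_iteration_residual_summability
    {H : Type*} [NormedAddCommGroup H] [InnerProductSpace ℝ H]
    (T : H → H) (hT : ∀ x y : H, ‖T x - T y‖ ≤ ‖x - y‖)
    (zs : H) (hzs : T zs = zs)
    (z : ℕ → H) (hz : ∀ k, z (k + 1) = (2 : ℝ)⁻¹ • (T (z k) + z k)) :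
    (∀ N : ℕ, ∑ k ∈ Finset.range N, ‖T (z k) - z k‖ ^ 2 ≤ 4 * ‖z 0 - zs‖ ^ 2) ∧
    Filter.Tendsto (fun k => ‖T (z k) - z k‖) Filter.atTop (nhds 0) := by
  have key : ∀ k : ℕ, ‖T (z k) - z k‖ ^ 2 ≤
      4 * ‖z k - zs‖ ^ 2 - 4 * ‖z (k+1) - zs‖ ^ 2 := by
    intro k
    have := km_key T hT zs hzs (z k)
    rw [← hz k] at this
    linarith
  have hsum : ∀ N : ℕ, ∑ k ∈ Finset.range N, ‖T (z k) - z k‖ ^ 2 ≤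
      4 * ‖z 0 - zs‖ ^ 2 - 4 * ‖z N - zs‖ ^ 2 := by
    intro N
    induction N with
    | zero => simp
    | succ n ih =>
      rw [Finset.sum_range_succ]
      have := key n
      linarith
  have hbound : ∀ N : ℕ, ∑ k ∈ Finset.range N, ‖T (z k) - z k‖ ^ 2 ≤
      4 * ‖z 0 - zs‖ ^ 2 := by
    intro N
    have := hsum N
    nlinarith [sq_nonneg ‖z N - zs‖]
  refine ⟨hbound, ?_⟩
  have hsummable : Summable (fun k => ‖T (z k) - z k‖ ^ 2) :=
    summable_of_sum_range_le (fun k => sq_nonneg _) hbound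
  have h0 : Filter.Tendsto (fun k => ‖T (z k) - z k‖ ^ 2) Filter.atTop (nhds 0) :=
    hsummable.tendsto_atTop_zero
  have := (Real.continuous_sqrt.tendsto 0).comp h0
  simp only [Real.sqrt_zero] at this
  convert this using 2 with k
  simp [Real.sqrt_sq (norm_nonneg _)]
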